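/- Let F_p, F_v : ℝ → ℝ^n be continuously differentiable. Then for every t ≥ 0, ∫₀ᵗ exp((t−τ) A0) θ1 (F_v(τ) − F_p'(τ)) dτ = ∫₀ᵗ exp((t−τ) A0) θ2 (F_v'(τ) − α_p F_p(τ) − α_v F_v(τ)) dτ + exp(t A0) (θ1 F_p(0) + θ2 F_v(0)) − θ1 F_p(t) − θ2 F_v(t). -/

import Mathlib

open Matrix intervalIntegral

noncomputable section

/-- `θ1 = [I_n; 0]` as a `2n × n` real matrix (rows indexed by `Fin n ⊕ Fin n`). -/
def theta1 (n : ℕ) : Matrix (Fin n ⊕ Fin n) (Fin n) ℝ :=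
  Matrix.of (Sum.elim (fun i j => (1 : Matrix (Fin n) (Fin n) ℝ) i j) (fun _ _ => 0))

/-- `θ2 = [0; I_n]` as a `2n × n` real matrix. -/
def theta2 (n : ℕ) : Matrix (Fin n ⊕ Fin n) (Fin n) ℝ :=
  Matrix.of (Sum.elim (fun _ _ => 0) (fun i j => (1 : Matrix (Fin n) (Fin n) ℝ) i j))

/-- `α = [α_p I_n, α_v I_n]` as an `n × 2n` real matrix. -/
def alphaMat (n : ℕ) (αp αv : ℝ) : Matrix (Fin n) (Fin n ⊕ Fin n) ℝ :=
  Matrix.of fun i => Sum.elim (fun j => αp * (1 : Matrix (Fin n) (Fin n) ℝ) i j)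
    (fun j => αv * (1 : Matrix (Fin n) (Fin n) ℝ) i j)

/-- `A0 = θ1 θ2ᵀ + θ2 [α_p I_n, α_v I_n]`, i.e. the block matrix
`[[0, I_n], [α_p I_n, α_v I_n]]`. -/
def A0 (n : ℕ) (αp αv : ℝ) : Matrix (Fin n ⊕ Fin n) (Fin n ⊕ Fin n) ℝ :=
  theta1 n * (theta2 n)ᵀ + theta2 n * alphaMat n αp αv


lemma t2t1 (n : ℕ) : (theta2 n)ᵀ * theta1 n = 0 := by
  ext i j
  simp [theta1, theta2, Matrix.mul_apply, Fintype.sum_sum_type, Matrix.one_apply]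

lemma t2t2 (n : ℕ) : (theta2 n)ᵀ * theta2 n = 1 := by
  ext i j
  simp only [theta2, Matrix.mul_apply, Fintype.sum_sum_type, Matrix.transpose_apply,
    Matrix.of_apply, Sum.elim_inl, Sum.elim_inr, mul_zero, zero_mul, Finset.sum_const_zero,
    zero_add, Matrix.one_apply, mul_ite, mul_one]
  rw [Finset.sum_ite_eq' (Finset.univ) j (fun k => if k = i then (1:ℝ) else 0)]
  simp [eq_comm]

lemma at1 (n : ℕ) (αp αv : ℝ) : alphaMat n αp αv * theta1 n = αp • 1 := by
  ext i j
  simp [theta1, theta2, alphaMat, Matrix.mul_apply, Fintype.sum_sum_type, Matrix.one_apply,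
    mul_ite]

lemma at2 (n : ℕ) (αp αv : ℝ) : alphaMat n αp αv * theta2 n = αv • 1 := by
  ext i j
  simp [theta1, theta2, alphaMat, Matrix.mul_apply, Fintype.sum_sum_type, Matrix.one_apply,
    mul_ite]

lemma A0t1 (n : ℕ) (αp αv : ℝ) : A0 n αp αv * theta1 n = αp • theta2 n := by
  rw [A0, Matrix.add_mul, Matrix.mul_assoc, Matrix.mul_assoc, t2t1, at1, Matrix.mul_zero,
    zero_add, Matrix.mul_smul, Matrix.mul_one]

lemma A0t2 (n : ℕ) (αp αv : ℝ) : A0 n αp αv * theta2 n = theta1 n + αv • theta2 n := by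
  rw [A0, Matrix.add_mul, Matrix.mul_assoc, Matrix.mul_assoc, t2t2, at2, Matrix.mul_one,
    Matrix.mul_smul, Matrix.mul_one]

/-- integration-by-parts identity, equation (18) of the paper:
for continuously differentiable `F_p, F_v : ℝ → ℝ^n` and all `t ≥ 0`,
`∫₀ᵗ exp((t-τ) A0) θ1 (F_v τ - F_p' τ) dτ
  = ∫₀ᵗ exp((t-τ) A0) θ2 (F_v' τ - α_p F_p τ - α_v F_v τ) dτ
    + exp(t A0) (θ1 F_p 0 + θ2 F_v 0) - θ1 F_p t - θ2 F_v t`. -/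
theorem formation_center_integration_by_parts
    (n : ℕ) (hn : 1 ≤ n) (αp αv : ℝ)
    (Fp Fv : ℝ → (Fin n → ℝ))
    (hFp : ContDiff ℝ 1 Fp) (hFv : ContDiff ℝ 1 Fv) :
    ∀ t : ℝ, 0 ≤ t →
      (∫ τ in (0:ℝ)..t, (NormedSpace.exp ((t - τ) • A0 n αp αv)).mulVec
          ((theta1 n).mulVec (Fv τ - deriv Fp τ)))
      = (∫ τ in (0:ℝ)..t, (NormedSpace.exp ((t - τ) • A0 n αp αv)).mulVec
          ((theta2 n).mulVec (deriv Fv τ - αp • Fp τ - αv • Fv τ)))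
        + (NormedSpace.exp (t • A0 n αp αv)).mulVec
            ((theta1 n).mulVec (Fp 0) + (theta2 n).mulVec (Fv 0))
        - (theta1 n).mulVec (Fp t) - (theta2 n).mulVec (Fv t) := by
  intro t ht
  letI : SeminormedRing (Matrix (Fin n ⊕ Fin n) (Fin n ⊕ Fin n) ℝ) :=
    Matrix.linftyOpSemiNormedRing
  letI : NormedRing (Matrix (Fin n ⊕ Fin n) (Fin n ⊕ Fin n) ℝ) := Matrix.linftyOpNormedRing
  letI : NormedAlgebra ℝ (Matrix (Fin n ⊕ Fin n) (Fin n ⊕ Fin n) ℝ) :=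
    Matrix.linftyOpNormedAlgebra
  set A := A0 n αp αv with hA
  set E : ℝ → Matrix (Fin n ⊕ Fin n) (Fin n ⊕ Fin n) ℝ :=
    fun σ => NormedSpace.exp ((t - σ) • A) with hEdef
  -- the bundled mulVec, continuous-linear in the matrix argument
  let L : Matrix (Fin n ⊕ Fin n) (Fin n ⊕ Fin n) ℝ →L[ℝ]
      ((Fin n ⊕ Fin n → ℝ) →L[ℝ] (Fin n ⊕ Fin n → ℝ)) :=
    LinearMap.toContinuousLinearMap
    { toFun := fun M => LinearMap.toContinuousLinearMap M.mulVecLin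
      map_add' := fun M N => by ext v i; simp [Matrix.add_mulVec, Matrix.mulVec]
      map_smul' := fun c M => by ext v i; simp [Matrix.smul_mulVec] }
  have hL : ∀ M v, L M v = M.mulVec v := fun M v => rfl
  -- derivatives of the data
  have hFp' : ∀ τ : ℝ, HasDerivAt Fp (deriv Fp τ) τ := fun τ =>
    ((hFp.differentiable one_ne_zero) τ).hasDerivAt
  have hFv' : ∀ τ : ℝ, HasDerivAt Fv (deriv Fv τ) τ := fun τ =>
    ((hFv.differentiable one_ne_zero) τ).hasDerivAt
  have hE : ∀ τ : ℝ, HasDerivAt E (-(E τ * A)) τ := by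
    intro τ
    have h1 := hasDerivAt_exp_smul_const (𝕂 := ℝ) A (t - τ)
    have h2 : HasDerivAt (fun σ : ℝ => t - σ) (-1) τ := (hasDerivAt_id τ).const_sub t
    have h3 := h1.scomp τ h2
    simp [neg_smul] at h3
    exact h3
  have hEc : Continuous E := continuous_iff_continuousAt.2 fun τ => (hE τ).continuousAt
  -- integrands
  set I1 : ℝ → (Fin n ⊕ Fin n → ℝ) :=
    fun τ => (E τ).mulVec ((theta1 n).mulVec (Fv τ - deriv Fp τ)) with hI1def
  set I2 : ℝ → (Fin n ⊕ Fin n → ℝ) :=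
    fun τ => (E τ).mulVec ((theta2 n).mulVec (deriv Fv τ - αp • Fp τ - αv • Fv τ)) with hI2def
  have hI1c : Continuous I1 := by
    have hv : Continuous fun τ => (theta1 n).mulVec (Fv τ - deriv Fp τ) :=
      ((theta1 n).mulVecLin.toContinuousLinearMap.continuous).comp
        (hFv.continuous.sub (hFp.continuous_deriv le_rfl))
    exact (L.continuous.comp hEc).clm_apply hv
  have hI2c : Continuous I2 := by
    have hv : Continuous fun τ => (theta2 n).mulVec (deriv Fv τ - αp • Fp τ - αv • Fv τ) :=
      ((theta2 n).mulVecLin.toContinuousLinearMap.continuous).comp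
        (((hFv.continuous_deriv le_rfl).sub (hFp.continuous.const_smul αp)).sub
          (hFv.continuous.const_smul αv))
    exact (L.continuous.comp hEc).clm_apply hv
  -- the potential function and its derivative
  set g : ℝ → (Fin n ⊕ Fin n → ℝ) :=
    fun σ => (E σ).mulVec ((theta1 n).mulVec (Fp σ) + (theta2 n).mulVec (Fv σ)) with hgdef
  have hg : ∀ τ : ℝ, HasDerivAt g (-(I1 τ) + I2 τ) τ := by
    intro τ
    have hc : HasDerivAt (fun σ => L (E σ)) (L (-(E τ * A))) τ :=
      L.hasFDerivAt.comp_hasDerivAt τ (hE τ)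
    have hw1 : HasDerivAt (fun σ => (theta1 n).mulVec (Fp σ))
        ((theta1 n).mulVec (deriv Fp τ)) τ :=
      ((theta1 n).mulVecLin.toContinuousLinearMap.hasFDerivAt).comp_hasDerivAt τ (hFp' τ)
    have hw2 : HasDerivAt (fun σ => (theta2 n).mulVec (Fv σ))
        ((theta2 n).mulVec (deriv Fv τ)) τ :=
      ((theta2 n).mulVecLin.toContinuousLinearMap.hasFDerivAt).comp_hasDerivAt τ (hFv' τ)
    have h0 := hc.clm_apply (hw1.add hw2)
    have h1 : HasDerivAt g
        ((-(E τ * A)).mulVec ((theta1 n).mulVec (Fp τ) + (theta2 n).mulVec (Fv τ))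
          + (E τ).mulVec ((theta1 n).mulVec (deriv Fp τ) + (theta2 n).mulVec (deriv Fv τ))) τ :=
      h0
    have heq : (-(E τ * A)).mulVec ((theta1 n).mulVec (Fp τ) + (theta2 n).mulVec (Fv τ))
          + (E τ).mulVec ((theta1 n).mulVec (deriv Fp τ) + (theta2 n).mulVec (deriv Fv τ))
        = -(I1 τ) + I2 τ := by
      rw [Matrix.neg_mulVec, ← Matrix.mulVec_mulVec]
      rw [Matrix.mulVec_add (A), Matrix.mulVec_mulVec, Matrix.mulVec_mulVec, A0t1, A0t2]
      rw [hI1def, hI2def]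
      simp only [Matrix.mulVec_add, Matrix.mulVec_sub, Matrix.smul_mulVec,
        Matrix.add_mulVec, Matrix.mulVec_smul, Matrix.neg_mulVec]
      abel
    rw [heq] at h1
    exact h1
  -- fundamental theorem of calculus
  have hint : IntervalIntegrable (fun τ => -(I1 τ) + I2 τ) MeasureTheory.volume 0 t :=
    ((hI1c.neg).add hI2c).intervalIntegrable 0 t
  have key := intervalIntegral.integral_eq_sub_of_hasDerivAt
    (f := g) (f' := fun τ => -(I1 τ) + I2 τ) (fun τ _ => hg τ) hint
  rw [intervalIntegral.integral_add (f := fun τ => -(I1 τ)) ((hI1c.neg).intervalIntegrable 0 t)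
      (hI2c.intervalIntegrable 0 t), intervalIntegral.integral_neg] at key
  have hgt : g t = (theta1 n).mulVec (Fp t) + (theta2 n).mulVec (Fv t) := by
    rw [hgdef]
    simp only [hEdef, sub_self, zero_smul, NormedSpace.exp_zero, Matrix.one_mulVec]
  have hg0 : g 0 = (NormedSpace.exp (t • A)).mulVec
      ((theta1 n).mulVec (Fp 0) + (theta2 n).mulVec (Fv 0)) := by
    rw [hgdef]
    simp only [hEdef, sub_zero]
  rw [hgt, hg0] at key
  -- rearrange
  have final : (∫ τ in (0:ℝ)..t, I1 τ)
      = (∫ τ in (0:ℝ)..t, I2 τ)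
        + (NormedSpace.exp (t • A)).mulVec
            ((theta1 n).mulVec (Fp 0) + (theta2 n).mulVec (Fv 0))
        - (theta1 n).mulVec (Fp t) - (theta2 n).mulVec (Fv t) := by
    funext i
    have hi := congrFun key i
    simp only [Pi.add_apply, Pi.sub_apply, Pi.neg_apply] at hi ⊢
    linarith
  exact final

end
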